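/- Suppose for coprime t and q that π(x; t, q) ≥ Li(x)/φ(q) − C₀ x^{1/2} (log x)^{15} for all x ≥ 2, where C₀ > 0 is an absolute constant. Then there is a constant C > 0 such that for all q ≥ 3, the least prime p ≡ t (mod q) satisfies p ≤ C φ(q)² (log φ(q))^{32}. -/

import Mathlib

open Filter Asymptotics Real

/-- The logarithmic integral `Li(x) = ∫₂ˣ dt / log t`. -/
noncomputable def Li (x : ℝ) : ℝ := ∫ t in (2:ℝ)..x, 1 / Real.log t

/-- The prime counting function as a function of a real variable. -/
noncomputable def primePi (x : ℝ) : ℝ := (Nat.primeCounting ⌊x⌋₊ : ℝ)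

/-- `piMod x t q` counts primes `p ≤ x` with `p ≡ t (mod q)`. -/
noncomputable def piMod (x : ℝ) (t q : ℕ) : ℝ :=
  (((Finset.range (⌊x⌋₊ + 1)).filter fun p => p.Prime ∧ p % q = t % q).card : ℝ)

lemma aux_contOn : ContinuousOn (fun t : ℝ => 1 / Real.log t) {t : ℝ | 2 ≤ t} := by
  apply ContinuousOn.div continuousOn_const
  · exact Real.continuousOn_log.mono (by intro t ht; simp at ht ⊢; linarith [ht])
  · intro t ht
    have : (0:ℝ) < Real.log t := Real.log_pos (by simpa using ht |>.trans_lt' one_lt_two)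
    exact ne_of_gt this

lemma aux_intble {a b : ℝ} (ha : 2 ≤ a) (hab : a ≤ b) :
    IntervalIntegrable (fun t : ℝ => 1 / Real.log t) MeasureTheory.volume a b := by
  apply ContinuousOn.intervalIntegrable
  apply aux_contOn.mono
  rw [Set.uIcc_of_le hab]
  intro t ht
  exact le_trans ha ht.1

lemma li_lower {x : ℝ} (hx : 4 ≤ x) : x / (2 * Real.log x) ≤ Li x := by
  have h2x : (2:ℝ) ≤ x := by linarith
  have hs4 : Real.sqrt 4 = 2 := by
    rw [show (4:ℝ) = 2^2 by norm_num, Real.sqrt_sq (by norm_num)]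
  have hs2 : 2 ≤ Real.sqrt x := by
    rw [← hs4]; exact Real.sqrt_le_sqrt hx
  have hxnn : (0:ℝ) ≤ x := by linarith
  have hsq : Real.sqrt x * Real.sqrt x = x := Real.mul_self_sqrt hxnn
  have hsx2 : Real.sqrt x ≤ x / 2 := by nlinarith
  have hsx : Real.sqrt x ≤ x := by linarith
  have hlogx : (0:ℝ) < Real.log x := Real.log_pos (by linarith)
  have hI1 := aux_intble (le_refl 2) hs2
  have hI2 := aux_intble hs2 hsx
  have hsplit : Li x = (∫ t in (2:ℝ)..(Real.sqrt x), 1 / Real.log t)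
      + ∫ t in (Real.sqrt x)..x, 1 / Real.log t :=
    (intervalIntegral.integral_add_adjacent_intervals hI1 hI2).symm
  have hA : 0 ≤ ∫ t in (2:ℝ)..(Real.sqrt x), 1 / Real.log t := by
    apply intervalIntegral.integral_nonneg hs2
    intro t ht
    exact div_nonneg zero_le_one (Real.log_nonneg (by linarith [ht.1]))
  have hB : (x - Real.sqrt x) * (1 / Real.log x) ≤ ∫ t in (Real.sqrt x)..x, 1 / Real.log t := by
    have := intervalIntegral.integral_mono_on (f := fun _ : ℝ => 1 / Real.log x)
      (g := fun t : ℝ => 1 / Real.log t) hsx intervalIntegrable_const hI2 ?_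
    · simpa [intervalIntegral.integral_const, smul_eq_mul] using this
    · intro t ht
      have ht2 : 2 ≤ t := le_trans hs2 ht.1
      have hlt : 0 < Real.log t := Real.log_pos (by linarith)
      exact one_div_le_one_div_of_le hlt (Real.log_le_log (by linarith) ht.2)
  have : x / (2 * Real.log x) ≤ (x - Real.sqrt x) * (1 / Real.log x) := by
    rw [mul_one_div, div_le_div_iff₀ (by positivity) hlogx]
    nlinarith [mul_nonneg (by linarith : (0:ℝ) ≤ x - 2 * Real.sqrt x) hlogx.le]
  linarith [hsplit, hA, hB, this]

lemma exists_good_C (C₀ : ℝ) (hC₀ : 0 < C₀) :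
    ∃ C : ℝ, 1 ≤ C ∧ (Real.log 2)⁻¹ ^ 32 ≤ C ∧
      2 * C₀ * (Real.log C / Real.log 2 + 34) ^ 16 < Real.sqrt C := by
  have hlog2 : (0:ℝ) < Real.log 2 := Real.log_pos (by norm_num)
  have hlog2' : (0.6931471803 : ℝ) < Real.log 2 := Real.log_two_gt_d9
  set r : ℝ := 2 * C₀ * 36 ^ 16 with hr
  have hrpos : 0 < r := by positivity
  set c : ℝ := (r + 1)⁻¹ with hc
  have hcpos : 0 < c := by positivity
  have h1 : (fun x : ℝ => (Real.log x) ^ 16) =o[atTop] fun x => Real.sqrt x := by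
    have h0 := isLittleO_log_rpow_atTop (show (0:ℝ) < 1/32 by norm_num)
    have h2 := h0.pow (n := 16) (by norm_num)
    refine h2.congr' (EventuallyEq.refl _ _) ?_
    filter_upwards [eventually_ge_atTop (0:ℝ)] with x hx
    rw [← Real.rpow_natCast (x ^ ((1:ℝ)/32)) 16, ← Real.rpow_mul hx, Real.sqrt_eq_rpow]
    norm_num
  have hev := h1.def hcpos
  obtain ⟨C, ⟨hev1, hev2⟩, hC1⟩ :=
    ((hev.and (eventually_ge_atTop (Real.exp 1))).and
      (eventually_ge_atTop (max 1 ((Real.log 2)⁻¹ ^ 32)))).exists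
  refine ⟨C, le_trans (le_max_left _ _) hC1, le_trans (le_max_right _ _) hC1, ?_⟩
  have hC1' : (1:ℝ) ≤ C := le_trans (le_max_left _ _) hC1
  have hlogC : (1:ℝ) ≤ Real.log C := by
    have := Real.log_le_log (Real.exp_pos 1) hev2
    rwa [Real.log_exp] at this
  have hs : 0 < Real.sqrt C := Real.sqrt_pos.mpr (by linarith)
  have hb : Real.log C / Real.log 2 + 34 ≤ 36 * Real.log C := by
    have h2 : Real.log C / Real.log 2 ≤ 2 * Real.log C := by
      rw [div_le_iff₀ hlog2]
      nlinarith
    nlinarith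
  have hb16 : (Real.log C / Real.log 2 + 34) ^ 16 ≤ 36 ^ 16 * (Real.log C) ^ 16 := by
    calc (Real.log C / Real.log 2 + 34) ^ 16 ≤ (36 * Real.log C) ^ 16 := by
          apply pow_le_pow_left₀ (by positivity) hb
      _ = 36 ^ 16 * (Real.log C) ^ 16 := by rw [mul_pow]
  have hnorm : (Real.log C) ^ 16 ≤ c * Real.sqrt C := by
    have := hev1
    rwa [Real.norm_eq_abs, Real.norm_eq_abs, abs_of_nonneg (by positivity),
      abs_of_nonneg (Real.sqrt_nonneg C)] at this
  have key : 2 * C₀ * (Real.log C / Real.log 2 + 34) ^ 16 ≤ r * c * Real.sqrt C := by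
    calc 2 * C₀ * (Real.log C / Real.log 2 + 34) ^ 16
        ≤ 2 * C₀ * (36 ^ 16 * (Real.log C) ^ 16) := by
          apply mul_le_mul_of_nonneg_left hb16 (by positivity)
      _ = r * (Real.log C) ^ 16 := by ring
      _ ≤ r * (c * Real.sqrt C) := mul_le_mul_of_nonneg_left hnorm (le_of_lt hrpos)
      _ = r * c * Real.sqrt C := by ring
  have hrc : r * c < 1 := by
    rw [hc, mul_inv_lt_iff₀ (by positivity)]
    linarith
  calc 2 * C₀ * (Real.log C / Real.log 2 + 34) ^ 16 ≤ r * c * Real.sqrt C := key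
    _ < 1 * Real.sqrt C := by apply mul_lt_mul_of_pos_right hrc hs
    _ = Real.sqrt C := one_mul _

theorem least_prime_in_AP
    (C₀ : ℝ) (hC₀ : 0 < C₀)
    (H : ∀ q t : ℕ, Nat.Coprime t q → ∀ x : ℝ, 2 ≤ x →
      piMod x t q ≥ Li x / (Nat.totient q : ℝ) - C₀ * Real.sqrt x * (Real.log x) ^ (15 : ℕ)) :
    ∃ C : ℝ, 0 < C ∧ ∀ q : ℕ, 3 ≤ q → ∀ t : ℕ, Nat.Coprime t q →
      ∃ p : ℕ, p.Prime ∧ p % q = t % q ∧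
        (p : ℝ) ≤ C * (Nat.totient q : ℝ) ^ 2 * (Real.log (Nat.totient q)) ^ (32 : ℕ) := by
  obtain ⟨C, hC1, hCl, hCkey⟩ := exists_good_C C₀ hC₀
  have hlog2 : (0:ℝ) < Real.log 2 := Real.log_pos (by norm_num)
  refine ⟨C, by linarith, ?_⟩
  intro q hq t hco
  -- totient bounds
  have hφ2 : 2 ≤ q.totient := by
    have hpos : 0 < q.totient := Nat.totient_pos.mpr (by omega)
    have heven : Even q.totient := Nat.totient_even (by omega)
    rcases heven with ⟨k, hk⟩
    omega
  set φ : ℝ := (q.totient : ℝ) with hφ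
  have hφ2' : (2:ℝ) ≤ φ := by
    rw [hφ]; exact_mod_cast hφ2
  set L : ℝ := Real.log φ with hL
  have hLpos : 0 < L := Real.log_pos (by linarith)
  have hL2 : Real.log 2 ≤ L := Real.log_le_log (by norm_num) hφ2'
  set x : ℝ := C * φ ^ 2 * L ^ 32 with hx
  have hCpos : (0:ℝ) < C := by linarith
  have hx4 : (4:ℝ) ≤ x := by
    have h1 : (Real.log 2)⁻¹ ^ 32 * 4 * (Real.log 2) ^ 32 ≤ C * φ ^ 2 * L ^ 32 := by
      have hA : (Real.log 2)⁻¹ ^ 32 ≤ C := hCl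
      have hB : (4:ℝ) ≤ φ ^ 2 := by nlinarith
      have hCc : (Real.log 2) ^ 32 ≤ L ^ 32 := pow_le_pow_left₀ (le_of_lt hlog2) hL2 32
      have := mul_le_mul (mul_le_mul hA hB (by norm_num) (by positivity))
        hCc (by positivity) (by positivity)
      linarith
    have h2 : (Real.log 2)⁻¹ ^ 32 * 4 * (Real.log 2) ^ 32 = 4 := by
      rw [show (Real.log 2)⁻¹ ^ 32 * 4 * (Real.log 2) ^ 32
        = ((Real.log 2)⁻¹ * Real.log 2) ^ 32 * 4 by ring,
        inv_mul_cancel₀ (ne_of_gt hlog2)]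
      norm_num
    rw [hx]; rw [h2] at h1; linarith
  have hx2 : (2:ℝ) ≤ x := by linarith
  have hxpos : (0:ℝ) < x := by linarith
  have hlogx : 0 < Real.log x := Real.log_pos (by linarith)
  -- sqrt x = sqrt C * φ * L ^ 16
  have hsqrtx : Real.sqrt x = Real.sqrt C * (φ * L ^ 16) := by
    rw [hx]
    have : C * φ ^ 2 * L ^ 32 = C * ((φ * L ^ 16) ^ 2) := by ring
    rw [this, Real.sqrt_mul (le_of_lt hCpos), Real.sqrt_sq (by positivity)]
  -- log x bound
  have hlogxle : Real.log x ≤ (Real.log C / Real.log 2 + 34) * L := by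
    have hlx : Real.log x = Real.log C + 2 * L + 32 * Real.log L := by
      rw [hx, Real.log_mul (by positivity) (by positivity),
        Real.log_mul (by positivity) (by positivity), Real.log_pow, Real.log_pow]
      push_cast; ring
    have hlogC : 0 ≤ Real.log C := Real.log_nonneg hC1
    have h1 : Real.log C ≤ (Real.log C / Real.log 2) * L := by
      rw [div_mul_eq_mul_div, le_div_iff₀ hlog2]
      nlinarith
    have h2 : Real.log L ≤ L := by
      have := Real.log_le_sub_one_of_pos hLpos
      linarith
    rw [hlx]; nlinarith
  -- key inequality : 2*C₀*φ*(log x)^16 < sqrt x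
  have hkey2 : 2 * C₀ * φ * (Real.log x) ^ 16 < Real.sqrt x := by
    have h16 : (Real.log x) ^ 16 ≤ ((Real.log C / Real.log 2 + 34) * L) ^ 16 :=
      pow_le_pow_left₀ (le_of_lt hlogx) hlogxle 16
    have hmp : ((Real.log C / Real.log 2 + 34) * L) ^ 16
        = (Real.log C / Real.log 2 + 34) ^ 16 * L ^ 16 := mul_pow _ _ _
    calc 2 * C₀ * φ * (Real.log x) ^ 16
        ≤ 2 * C₀ * φ * ((Real.log C / Real.log 2 + 34) ^ 16 * L ^ 16) := by
          rw [← hmp]; exact mul_le_mul_of_nonneg_left h16 (by positivity)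
      _ = (2 * C₀ * (Real.log C / Real.log 2 + 34) ^ 16) * (φ * L ^ 16) := by ring
      _ < Real.sqrt C * (φ * L ^ 16) := by
          apply mul_lt_mul_of_pos_right hCkey (by positivity)
      _ = Real.sqrt x := hsqrtx.symm
  -- error term < main term
  have hmain : C₀ * Real.sqrt x * (Real.log x) ^ (15:ℕ) < Li x / φ := by
    have hLi := li_lower hx4
    have hsqx : Real.sqrt x * Real.sqrt x = x := Real.mul_self_sqrt (le_of_lt hxpos)
    have hstep : C₀ * Real.sqrt x * (Real.log x) ^ (15:ℕ) < x / (2 * Real.log x) / φ := by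
      rw [div_div, lt_div_iff₀ (by positivity)]
      have h := mul_lt_mul_of_pos_right hkey2 (Real.sqrt_pos.mpr hxpos)
      have hp : (Real.log x) ^ (16:ℕ) = (Real.log x) ^ (15:ℕ) * Real.log x := by
        rw [← pow_succ]
      nlinarith [h, hsqx, hp]
    have hmono : x / (2 * Real.log x) / φ ≤ Li x / φ :=
      div_le_div_of_nonneg_right hLi (by positivity) |>.trans_eq rfl
    linarith
  have hH := H q t hco x hx2
  have hpos : 0 < piMod x t q := by
    have : 0 < Li x / φ - C₀ * Real.sqrt x * (Real.log x) ^ (15:ℕ) := by linarith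
    calc (0:ℝ) < _ := this
      _ ≤ piMod x t q := hH
  -- extract a prime
  rw [piMod] at hpos
  have hcard : 0 < ((Finset.range (⌊x⌋₊ + 1)).filter
      fun p => p.Prime ∧ p % q = t % q).card := by exact_mod_cast hpos
  obtain ⟨p, hp⟩ := Finset.card_pos.mp hcard
  rw [Finset.mem_filter, Finset.mem_range] at hp
  refine ⟨p, hp.2.1, hp.2.2, ?_⟩
  have hple : p ≤ ⌊x⌋₊ := by omega
  have : (p:ℝ) ≤ (⌊x⌋₊ : ℝ) := by exact_mod_cast hple
  calc (p:ℝ) ≤ (⌊x⌋₊ : ℝ) := this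
    _ ≤ x := Nat.floor_le (le_of_lt hxpos)
    _ = C * φ ^ 2 * L ^ 32 := hx
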